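/- Let k be a field, V a finite-dimensional k-vector space, f an endomorphism of V, g an automorphism of V, and c ∈ k an element that is not a root of unity. If g ∘ f ∘ g⁻¹ = c · f, then f is nilpotent. -/

import Mathlib

/-- if `f` is an endomorphism of a finite-dimensional vector space `V`
over a field `k`, `g` is an automorphism of `V`, `c ∈ k` is not a root of unity, and
`g ∘ f ∘ g⁻¹ = c • f`, then `f` is nilpotent. -/
theorem statement16 {k : Type*} [Field k] {V : Type*} [AddCommGroup V] [Module k V]
    [FiniteDimensional k V] (f : V →ₗ[k] V) (g : V ≃ₗ[k] V) (c : k)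
    (hc : ∀ m : ℕ, 0 < m → c ^ m ≠ 1)
    (hconj : g.toLinearMap ∘ₗ f ∘ₗ g.symm.toLinearMap = c • f) :
    IsNilpotent f := by
  -- handle c = 0 separately
  rcases eq_or_ne c 0 with hc0 | hc0
  · have hf0 : f = 0 := by
      have := congrArg (fun h => g.symm.toLinearMap ∘ₗ h ∘ₗ g.toLinearMap) hconj
      simp only [hc0, zero_smul] at this
      have h2 : g.symm.toLinearMap ∘ₗ (g.toLinearMap ∘ₗ f ∘ₗ g.symm.toLinearMap) ∘ₗ
          g.toLinearMap = f := by
        ext x; simp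
      rw [h2] at this
      simpa using this
    exact hf0 ▸ ⟨1, by simp⟩
  by_contra hnil
  -- every power of f is nonzero
  have hpow : ∀ m : ℕ, f ^ (m + 1) ≠ 0 := by
    intro m hm
    exact hnil ⟨m + 1, hm⟩
  -- the conjugation operator on End V
  set G : Module.End k (Module.End k V) := (LinearEquiv.conj g).toLinearMap
  have hGf : G f = c • f := by
    simpa [G, LinearEquiv.conj_apply, LinearMap.comp_assoc] using hconj
  have hG : ∀ m : ℕ, G (f ^ (m + 1)) = c ^ (m + 1) • f ^ (m + 1) := by
    intro m
    induction m with
    | zero => simpa using hGf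
    | succ n ih =>
      have : G (f ^ (n + 1) * f) = G (f ^ (n + 1)) * G f := by
        simpa [G, Module.End.mul_eq_comp] using (LinearEquiv.conj_comp g f (f ^ (n + 1)))
      calc G (f ^ (n + 2)) = G (f ^ (n + 1)) * G f := by
            rw [← this, pow_succ]
        _ = c ^ (n + 2) • f ^ (n + 2) := by
            rw [ih, hGf, smul_mul_smul_comm, ← pow_succ, ← pow_succ]
  -- eigenvalues c^(m+1) are distinct
  have hinj : Function.Injective (fun m : ℕ => c ^ (m + 1)) := by
    intro a b hab
    by_contra hne
    wlog h : a < b generalizing a b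
    · exact this hab.symm (Ne.symm hne) (lt_of_le_of_ne (not_lt.mp h) (Ne.symm hne))
    have : c ^ (a + 1) * c ^ (b - a) = c ^ (a + 1) * 1 := by
      rw [mul_one, ← pow_add]
      simp only at hab
      rw [show a + 1 + (b - a) = b + 1 by omega, hab]
    have hba : c ^ (b - a) = 1 := by
      have := mul_left_cancel₀ (pow_ne_zero _ hc0) this
      exact this
    exact hc (b - a) (by omega) hba
  have hli : LinearIndependent k (fun m : ℕ => f ^ (m + 1)) :=
    G.eigenvectors_linearIndependent' (fun m : ℕ => c ^ (m + 1)) hinj _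
      (fun m => ⟨Module.End.mem_eigenspace_iff.mpr (hG m), hpow m⟩)
  exact Module.Finite.not_linearIndependent_of_infinite _ hli
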